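/- For all integers l ≥ 1 and k ≥ 1, Σ_{α ∈ ℤ_{≥0}^l, α₁+⋯+α_l = k} ( ∏_{i=1}^{l} 𝒜_{αᵢ} ) · t^{n(α)} = t^{lk} − t^{l(k−1)} in ℤ[t]; and for k = 0 the same sum equals 1. -/

import Mathlib

open Finset Polynomial

/-- `𝒜₀ = 1` and `𝒜_k = (t − 1) t^{k−1}` for `k ≥ 1`, in `ℤ[t]`. -/
noncomputable def AA (k : ℕ) : Polynomial ℤ :=
  if k = 0 then 1 else (X - 1) * X ^ (k - 1)

/-- For `l ≥ 1` and `k ≥ 1`,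
`Σ_{α ∈ ℤ_{≥0}^l, α₁+⋯+α_l = k} (∏_{i=1}^{l} 𝒜_{αᵢ}) t^{n(α)} = t^{lk} − t^{l(k−1)}`
in `ℤ[t]`, where `n(α) = Σ_{i=1}^{l} (i−1)αᵢ`; and for `k = 0` the same sum equals `1`. -/

lemma sum_adt_succ {M : Type*} [AddCommMonoid M] (l k : ℕ) (f : (Fin (l+1) → ℕ) → M) :
    ∑ α ∈ Finset.Nat.antidiagonalTuple (l+1) k, f α =
      ∑ p ∈ Finset.HasAntidiagonal.antidiagonal k, ∑ β ∈ Finset.Nat.antidiagonalTuple l p.2,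
        f (Fin.cons p.1 β) := by
  rw [Finset.sum_sigma']
  refine Finset.sum_nbij'
    (fun (α : Fin (l+1) → ℕ) => (⟨(α 0, ∑ i : Fin l, α i.succ), Fin.tail α⟩ : (_ : ℕ × ℕ) × (Fin l → ℕ)))
    (fun x => Fin.cons x.1.1 x.2) ?_ ?_ ?_ ?_ ?_
  · intro α h
    simp only [Finset.Nat.mem_antidiagonalTuple, Fin.sum_univ_succ] at h
    simp [Finset.mem_sigma, Finset.HasAntidiagonal.mem_antidiagonal, Finset.Nat.mem_antidiagonalTuple,
      Fin.tail, ← h]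
  · rintro ⟨⟨a, b⟩, β⟩ h
    simp only [Finset.mem_sigma, Finset.HasAntidiagonal.mem_antidiagonal,
      Finset.Nat.mem_antidiagonalTuple] at h ⊢
    rw [Fin.sum_univ_succ]
    simp [h.2, h.1]
  · intro α h
    exact Fin.cons_self_tail α
  · rintro ⟨⟨a, b⟩, β⟩ h
    simp only [Finset.mem_sigma, Finset.HasAntidiagonal.mem_antidiagonal,
      Finset.Nat.mem_antidiagonalTuple] at h
    ext1
    · simp [h.2]
    · simp [Fin.tail]
  · intro x h; simp [Fin.cons_self_tail]


lemma hsum (l k : ℕ) :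
    ∑ b ∈ Finset.range k, (if b = 0 then (1 : Polynomial ℤ) else X ^ (l*b) - X ^ (l*(b-1)))
      = if k = 0 then 0 else X ^ (l*(k-1)) := by
  induction k with
  | zero => simp
  | succ n ih =>
    rw [Finset.sum_range_succ, ih]
    match n with
    | 0 => simp
    | m+1 => simp

lemma key (l : ℕ) (hl : 1 ≤ l) (k : ℕ) :
    ∑ α ∈ Finset.Nat.antidiagonalTuple l k,
        (∏ i, AA (α i)) * X ^ (∑ i : Fin l, (i : ℕ) * α i)
      = if k = 0 then 1 else X ^ (l*k) - X ^ (l*(k-1)) := by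
  induction l, hl using Nat.le_induction generalizing k with
  | base =>
    rw [Finset.Nat.antidiagonalTuple_one, Finset.sum_singleton]
    simp only [Fin.sum_univ_one, Fin.prod_univ_one, Matrix.cons_val_zero, Fin.val_zero,
      zero_mul, pow_zero, mul_one, one_mul, AA]
    split
    · exact if_pos ‹_›
    · rename_i hk
      obtain ⟨m, rfl⟩ := Nat.exists_eq_succ_of_ne_zero hk
      simp [pow_succ]
      ring
  | succ l hl IH =>
    rw [sum_adt_succ]
    have step : ∀ p ∈ Finset.HasAntidiagonal.antidiagonal k,
        (∑ β ∈ Finset.Nat.antidiagonalTuple l p.2,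
          (∏ i : Fin (l+1), AA ((Fin.cons p.1 β : Fin (l+1) → ℕ) i)) * X ^ (∑ i : Fin (l+1), (i : ℕ) * (Fin.cons p.1 β : Fin (l+1) → ℕ) i))
        = AA p.1 * X ^ p.2 *
            (if p.2 = 0 then 1 else X ^ (l*p.2) - X ^ (l*(p.2-1))) := by
      intro p hp
      rw [← IH p.2, Finset.mul_sum]
      refine Finset.sum_congr rfl fun β hβ => ?_
      rw [Finset.Nat.mem_antidiagonalTuple] at hβ
      rw [Fin.prod_univ_succ, Fin.sum_univ_succ]
      simp only [Fin.cons_zero, Fin.cons_succ, Fin.val_zero, zero_mul, zero_add,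
        Fin.val_succ]
      have : ∑ i : Fin l, ((i : ℕ) + 1) * β i
          = (∑ i : Fin l, (i : ℕ) * β i) + p.2 := by
        rw [← hβ, ← Finset.sum_add_distrib]
        congr 1; ext i; ring
      rw [this, pow_add]
      ring
    rw [Finset.sum_congr rfl step]
    match k with
    | 0 => simp [AA]
    | n+1 =>
      rw [Finset.Nat.sum_antidiagonal_eq_sum_range_succ_mk, Finset.sum_range_succ']
      have h2 : ∀ i ∈ Finset.range (n+1),
          AA ((i+1, n+1-(i+1)).1) * X ^ ((i+1, n+1-(i+1)).2) *
            (if ((i+1, n+1-(i+1)).2 : ℕ) = 0 then (1 : Polynomial ℤ)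
              else X ^ (l*(i+1, n+1-(i+1)).2) - X ^ (l*((i+1, n+1-(i+1)).2-1)))
          = (X-1) * X^n *
            (if n-i = 0 then (1 : Polynomial ℤ) else X^(l*(n-i)) - X^(l*((n-i)-1))) := by
        intro i hi
        rw [Finset.mem_range] at hi
        have e : n+1-(i+1) = n-i := by omega
        have hx : (X : Polynomial ℤ)^i * X^(n-i) = X^n := by
          rw [← pow_add]; congr 1; omega
        simp only [e, AA, if_neg (Nat.succ_ne_zero i), Nat.add_sub_cancel]
        calc (X-1) * X^i * X^(n-i) *
              (if n-i = 0 then (1 : Polynomial ℤ) else X^(l*(n-i)) - X^(l*((n-i)-1)))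
            = (X-1) * (X^i * X^(n-i)) *
              (if n-i = 0 then (1 : Polynomial ℤ) else X^(l*(n-i)) - X^(l*((n-i)-1))) := by
              ring
          _ = _ := by rw [hx]
      rw [Finset.sum_congr rfl h2, ← Finset.mul_sum]
      have h3 : ∑ i ∈ Finset.range (n+1),
          (if n-i = 0 then (1 : Polynomial ℤ) else X^(l*(n-i)) - X^(l*((n-i)-1)))
          = X ^ (l*n) := by
        have h4 := hsum l (n+1)
        rw [← Finset.sum_range_reflect (fun b => (if b = 0 then (1 : Polynomial ℤ)
            else X^(l*b) - X^(l*(b-1)))) (n+1)] at h4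
        simpa using h4
      rw [h3]
      simp only [AA, Nat.sub_zero, Nat.add_sub_cancel]
      norm_num
      ring

theorem crystal_sum_identity (l k : ℕ) (hl : 1 ≤ l) :
    (1 ≤ k →
      ∑ α ∈ Finset.Nat.antidiagonalTuple l k,
          (∏ i, AA (α i)) * X ^ (∑ i : Fin l, (i : ℕ) * α i) =
        X ^ (l * k) - X ^ (l * (k - 1))) ∧
    (k = 0 →
      ∑ α ∈ Finset.Nat.antidiagonalTuple l k,
          (∏ i, AA (α i)) * X ^ (∑ i : Fin l, (i : ℕ) * α i) = 1) := by
  constructor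
  · intro hk
    rw [key l hl k, if_neg (by omega)]
  · rintro rfl
    rw [key l hl 0, if_pos rfl]
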